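/- Let p be an odd prime and α ∈ F_{p^4} of multiplicative order p^2 + 1 satisfying α^p = (aα + b)/(α + d) for some a, b, d ∈ F_p. Then ad + 1 = 0, a² + b = 0, ab − d = 0, and consequently a = −1/d, b = −1/d², and d⁴ = 1. -/

import Mathlib

/-- If `p` is an odd prime and `α ∈ 𝔽_{p⁴}` has multiplicative order `p² + 1` and
satisfies `α^p = (aα + b)/(α + d)` with `a, b, d ∈ 𝔽_p`, then `ad + 1 = 0`,
`a² + b = 0`, `ab − d = 0`, and consequently `a = −1/d`, `b = −1/d²`, `d⁴ = 1`. -/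
theorem stmt18 (p : ℕ) [Fact p.Prime] (hp : Odd p)
    (α : GaloisField p 4) (hα : orderOf α = p ^ 2 + 1)
    (a b d : ZMod p)
    (hden : α + algebraMap (ZMod p) (GaloisField p 4) d ≠ 0)
    (heq : α ^ p = (algebraMap (ZMod p) (GaloisField p 4) a * α
                      + algebraMap (ZMod p) (GaloisField p 4) b)
                    / (α + algebraMap (ZMod p) (GaloisField p 4) d)) :
    a * d + 1 = 0 ∧ a ^ 2 + b = 0 ∧ a * b - d = 0 ∧
      a = -d⁻¹ ∧ b = -(d ^ 2)⁻¹ ∧ d ^ 4 = 1 := by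
  have hprime : p.Prime := Fact.out
  set F := algebraMap (ZMod p) (GaloisField p 4) with hF
  have hFinj : Function.Injective F := F.injective
  have hpne2 : p ≠ 2 := by rintro rfl; exact (by decide : ¬ Odd 2) hp
  have hp3 : 3 ≤ p := by have := hprime.two_le; omega
  have hpsq : p < p ^ 2 := by nlinarith
  have hα1 : α ^ (p ^ 2 + 1) = 1 := by rw [← hα]; exact pow_orderOf_eq_one α
  have hα0 : α ≠ 0 := by
    rintro rfl
    rw [zero_pow (by omega)] at hα1
    exact zero_ne_one hα1
  have hne_pow : ∀ n : ℕ, 0 < n → n < p ^ 2 + 1 → α ^ n ≠ 1 := by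
    intro n h1 h2 h3
    have := Nat.le_of_dvd h1 (hα ▸ orderOf_dvd_of_pow_eq_one h3)
    omega
  have hαinv : α ^ (p * p) * α = 1 := by
    rw [← pow_succ, show p * p + 1 = p ^ 2 + 1 from by ring]
    exact hα1
  have hpow_card : ∀ c : ZMod p, F c ^ p = F c := fun c => by
    rw [← map_pow, ZMod.pow_card]
  have hfrob_add : ∀ x y : GaloisField p 4, (x + y) ^ p = x ^ p + y ^ p := fun x y =>
    add_pow_char _ _ _
  have hns : ∀ c : ZMod p, α ≠ F c := by
    intro c h
    have h1 : α ^ p = α := by rw [h, hpow_card]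
    have h2 : α ^ (p - 1) * α = 1 * α := by
      rw [one_mul, ← pow_succ, show p - 1 + 1 = p from by omega, h1]
    exact hne_pow (p - 1) (by omega) (by omega) (mul_right_cancel₀ hα0 h2)
  have hindep : ∀ s t : ZMod p, F s * α + F t = 0 → s = 0 ∧ t = 0 := by
    intro s t hst
    by_cases hs : s = 0
    · refine ⟨hs, hFinj ?_⟩
      rw [map_zero]
      simpa [hs] using hst
    · exfalso
      have hFs : F s ≠ 0 := fun h => hs (hFinj (by simpa using h))
      apply hns (-(t / s))
      rw [map_neg, map_div₀]
      field_simp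
      linear_combination hst
  have hpα : α ^ p ≠ α := by
    intro h
    have h2 : α ^ (p - 1) * α = 1 * α := by
      rw [one_mul, ← pow_succ, show p - 1 + 1 = p from by omega, h]
    exact hne_pow (p - 1) (by omega) (by omega) (mul_right_cancel₀ hα0 h2)
  have hkey : ∀ k r : ZMod p, α ^ p ≠ F k * α + F r := by
    intro k r hkr
    have hp2' : α ^ (p * p) = F k * α ^ p + F r := by
      have h := congrArg (· ^ p) hkr
      simpa only [hfrob_add, mul_pow, hpow_card, ← pow_mul] using h
    by_cases hk : k = 0
    · subst hk
      simp only [map_zero, zero_mul, zero_add] at hkr hp2'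
      have h1 : α ^ (p + 1) = 1 := by
        rw [pow_succ, hkr, ← hp2']
        exact hαinv
      exact hne_pow (p + 1) (by omega) (by omega) h1
    · set c := k * r + r with hcdef
      have hc : F c = F k * F r + F r := by rw [hcdef, map_add, map_mul]
      have e1 : F k * F k * (α * α) + F c * α = 1 := by
        linear_combination hαinv - α * hp2' - F k * α * hkr + α * hc
      have e2 : F k * F k * (α ^ p * α ^ p) + F c * α ^ p = 1 := by
        have h := congrArg (· ^ p) e1
        simpa only [one_pow, hfrob_add, mul_pow, hpow_card] using h
      have e3 : F k * F k * (α ^ (p * p) * α ^ (p * p)) + F c * α ^ (p * p) = 1 := by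
        have h := congrArg (· ^ p) e2
        simpa only [one_pow, hfrob_add, mul_pow, hpow_card, ← pow_mul] using h
      have hXα : α ^ (p * p) ≠ α := by
        intro h
        have h1 : α ^ 2 = 1 := by rw [← hαinv, h]; ring
        exact hne_pow 2 (by omega) (by omega) h1
      have he4 : F k * F k * (α ^ p + α) + F c = 0 := by
        rcases mul_eq_zero.mp (show (α ^ p - α) * (F k * F k * (α ^ p + α) + F c) = 0 by
          linear_combination e2 - e1) with h | h
        · exact absurd (by linear_combination h : α ^ p = α) hpα
        · exact h
      have he5 : F k * F k * (α ^ (p * p) + α) + F c = 0 := by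
        rcases mul_eq_zero.mp (show (α ^ (p * p) - α) * (F k * F k * (α ^ (p * p) + α) + F c) = 0 by
          linear_combination e3 - e1) with h | h
        · exact absurd (by linear_combination h : α ^ (p * p) = α) hXα
        · exact h
      have hFk : F k ≠ 0 := fun h => hk (hFinj (by simpa using h))
      have h6 : F k * F k * (α ^ p - α ^ (p * p)) = 0 := by linear_combination he4 - he5
      have h7 : α ^ p = α ^ (p * p) := by
        rcases mul_eq_zero.mp h6 with h | h
        · exact absurd (mul_self_eq_zero.mp h) hFk
        · linear_combination h
      have h8 : α ^ (p + 1) = 1 := by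
        rw [pow_succ, h7]
        exact hαinv
      exact hne_pow (p + 1) (by omega) (by omega) h8
  have hR : α ^ p * (α + F d) = F a * α + F b := by
    rw [heq, div_mul_cancel₀ _ hden]
  have hS0 : α ^ (p * p) * (α ^ p + F d) = F a * α ^ p + F b := by
    have h := congrArg (· ^ p) hR
    simpa only [hfrob_add, mul_pow, hpow_card, ← pow_mul] using h
  have hS : α ^ p + F d = F a * (α ^ p * α) + F b * α := by
    linear_combination α * hS0 - (α ^ p + F d) * hαinv
  have hlin : (1 + F a * F d) * α ^ p = (F a * F a + F b) * α + (F a * F b - F d) := by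
    linear_combination hS + F a * hR
  have had : a * d + 1 = 0 := by
    by_contra h1
    apply hkey ((a ^ 2 + b) / (a * d + 1)) ((a * b - d) / (a * d + 1))
    have hq : F (a * d + 1) ≠ 0 := fun h => h1 (hFinj (by simpa using h))
    rw [map_div₀, map_div₀, div_mul_eq_mul_div, ← add_div, eq_div_iff hq]
    simp only [map_add, map_mul, map_sub, map_pow, map_one]
    linear_combination hlin
  have h2 : F (a ^ 2 + b) * α + F (a * b - d) = 0 := by
    have h0 : F (a * d + 1) = 0 := by rw [had, map_zero]
    simp only [map_add, map_mul, map_sub, map_pow, map_one] at h0 ⊢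
    linear_combination α ^ p * h0 - hlin
  obtain ⟨hA, hB⟩ := hindep _ _ h2
  have hd0 : d ≠ 0 := by
    rintro rfl
    rw [mul_zero, zero_add] at had
    exact one_ne_zero had
  have ha' : a = -d⁻¹ := by
    field_simp
    linear_combination had
  have hb' : b = -(d ^ 2)⁻¹ := by
    field_simp
    linear_combination d ^ 2 * hA - (a * d - 1) * had
  have hd4 : d ^ 4 = 1 := by
    have h := hB
    rw [ha', hb'] at h
    field_simp at h
    linear_combination -h
  exact ⟨had, hA, hB, ha', hb', hd4⟩
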